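/- Let N be a complete nest and L a weakly closed Lie T(N)-module. If P ∈ N satisfies P^⊥ L P ≠ {0}, then P L P^⊥ = P B(H) P^⊥; that is, every operator of the form P A P^⊥ with A ∈ B(H) belongs to L. -/

import Mathlib

/-- The order on orthogonal projections: `P ≤ Q` encoded as `P*Q = P ∧ Q*P = P`. -/
def opLe {H : Type} [NormedAddCommGroup H] [InnerProductSpace ℂ H]
    (P Q : H →L[ℂ] H) : Prop := P * Q = P ∧ Q * P = P

/-- Strict order on projections. -/
def opLt {H : Type} [NormedAddCommGroup H] [InnerProductSpace ℂ H]
    (P Q : H →L[ℂ] H) : Prop := opLe P Q ∧ P ≠ Q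

/-- A complete nest: a totally ordered complete sublattice of the lattice of orthogonal
projections on `H`, containing `0` and `1`.  Completeness means that every subset has a
least upper bound and a greatest lower bound (computed in the full projection lattice)
belonging to the nest. -/
structure IsNest {H : Type} [NormedAddCommGroup H] [InnerProductSpace ℂ H] [CompleteSpace H]
    (N : Set (H →L[ℂ] H)) : Prop where
  proj : ∀ P ∈ N, IsSelfAdjoint P ∧ IsIdempotentElem P
  zero_mem : (0 : H →L[ℂ] H) ∈ N
  one_mem : (1 : H →L[ℂ] H) ∈ N
  total : ∀ P ∈ N, ∀ Q ∈ N, opLe P Q ∨ opLe Q P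
  complete_sup : ∀ S ⊆ N, ∃ B ∈ N, (∀ P ∈ S, opLe P B) ∧
    ∀ C : H →L[ℂ] H, IsSelfAdjoint C → IsIdempotentElem C → (∀ P ∈ S, opLe P C) → opLe B C
  complete_inf : ∀ S ⊆ N, ∃ B ∈ N, (∀ P ∈ S, opLe B P) ∧
    ∀ C : H →L[ℂ] H, IsSelfAdjoint C → IsIdempotentElem C → (∀ P ∈ S, opLe C P) → opLe C B

/-- `B` is the supremum, taken in the nest `N`, of the subset `S` of `N`. -/
def IsNestSup {H : Type} [NormedAddCommGroup H] [InnerProductSpace ℂ H]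
    (N S : Set (H →L[ℂ] H)) (B : H →L[ℂ] H) : Prop :=
  B ∈ N ∧ (∀ P ∈ S, opLe P B) ∧ ∀ C ∈ N, (∀ P ∈ S, opLe P C) → opLe B C

/-- `B` is the infimum, taken in the nest `N`, of the subset `S` of `N`. -/
def IsNestInf {H : Type} [NormedAddCommGroup H] [InnerProductSpace ℂ H]
    (N S : Set (H →L[ℂ] H)) (B : H →L[ℂ] H) : Prop :=
  B ∈ N ∧ (∀ P ∈ S, opLe B P) ∧ ∀ C ∈ N, (∀ P ∈ S, opLe C P) → opLe C B

/-- The nest algebra `T(N)` of a nest `N`: all `T` with `P^⊥ T P = 0` for all `P ∈ N`. -/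
def nestAlg {H : Type} [NormedAddCommGroup H] [InnerProductSpace ℂ H]
    (N : Set (H →L[ℂ] H)) : Set (H →L[ℂ] H) :=
  {T | ∀ P ∈ N, (1 - P) * T * P = 0}

/-- A subset of `B(H)` is weakly closed if it is closed in the weak operator topology. -/
def WClosed {H : Type} [NormedAddCommGroup H] [InnerProductSpace ℂ H] [CompleteSpace H]
    (M : Set (H →L[ℂ] H)) : Prop :=
  IsClosed (ContinuousLinearMapWOT.ofCLM '' M)

/-- The closure of a subset of `B(H)` in the weak operator topology. -/
def wClosure {H : Type} [NormedAddCommGroup H] [InnerProductSpace ℂ H] [CompleteSpace H]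
    (S : Set (H →L[ℂ] H)) : Set (H →L[ℂ] H) :=
  ContinuousLinearMapWOT.ofCLM ⁻¹' (closure (ContinuousLinearMapWOT.ofCLM '' S))

/-- The rank-one operator `x ⊗ y : z ↦ ⟨z,x⟩y` (inner product linear in its first variable,
i.e. `⟨z,x⟩ = ⟪x,z⟫` in Mathlib's convention). -/
noncomputable def rankOne {H : Type} [NormedAddCommGroup H] [InnerProductSpace ℂ H]
    (x y : H) : H →L[ℂ] H :=
  (innerSL ℂ x).smulRight y

section AuxLemmas

open scoped InnerProductSpace
set_option linter.unusedSectionVars false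

variable {H : Type} [NormedAddCommGroup H] [InnerProductSpace ℂ H] [CompleteSpace H]

lemma aux_rankOne_apply (x y z : H) : rankOne x y z = ⟪x, z⟫_ℂ • y := rfl

lemma aux_mul_rankOne (M : H →L[ℂ] H) (x y : H) : M * rankOne x y = rankOne x (M y) := by
  ext z; simp [aux_rankOne_apply, ContinuousLinearMap.mul_apply]

lemma aux_rankOne_mul (M : H →L[ℂ] H) (hM : IsSelfAdjoint M) (x y : H) :
    rankOne x y * M = rankOne (M x) y := by
  ext z
  simp only [aux_rankOne_apply, ContinuousLinearMap.mul_apply]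
  conv_rhs => rw [← hM.adjoint_eq, ContinuousLinearMap.adjoint_inner_left]

lemma aux_rankOne_smul (x y : H) (c : ℂ) : rankOne x (c • y) = c • rankOne x y := by
  ext z
  show ⟪x, z⟫_ℂ • (c • y) = c • (⟪x, z⟫_ℂ • y)
  rw [smul_comm]

lemma aux_rankOne_mul_rankOne (a b c d : H) :
    rankOne a b * rankOne c d = ⟪a, d⟫_ℂ • rankOne c b := by
  ext z
  simp only [aux_rankOne_apply, ContinuousLinearMap.mul_apply, ContinuousLinearMap.smul_apply,
    inner_smul_right, smul_smul, mul_comm]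

lemma aux_corner_mem (N : Set (H →L[ℂ] H)) (hN : IsNest N) (P : H →L[ℂ] H) (hP : P ∈ N)
    (A : H →L[ℂ] H) : P * A * (1 - P) ∈ nestAlg N := by
  intro Q hQ
  have hassoc : (1 - Q) * (P * A * (1 - P)) * Q = ((1 - Q) * P) * (A * ((1 - P) * Q)) := by
    noncomm_ring
  rcases hN.total Q hQ P hP with ⟨h1, h2⟩ | ⟨h1, h2⟩
  · -- opLe Q P : Q*P = Q, P*Q = Q
    have h : (1 - P) * Q = 0 := by rw [sub_mul, one_mul, h2, sub_self]
    rw [hassoc, h, mul_zero, mul_zero]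
  · -- opLe P Q : P*Q = P, Q*P = P
    have h : (1 - Q) * P = 0 := by rw [sub_mul, one_mul, h2, sub_self]
    rw [hassoc, h, zero_mul]

end AuxLemmas

open scoped InnerProductSpace in
/-- If `L` is a weakly closed Lie `T(N)`-module and `P ∈ N` satisfies `P^⊥ L P ≠ {0}`,
then `P L P^⊥ = P B(H) P^⊥`; in particular every `P A P^⊥` with `A ∈ B(H)` lies in `L`. -/
theorem corner_full_of_lower_corner_nonzero
    {H : Type} [NormedAddCommGroup H] [InnerProductSpace ℂ H] [CompleteSpace H]
    (N : Set (H →L[ℂ] H)) (hN : IsNest N) (L : Submodule ℂ (H →L[ℂ] H))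
    (hLc : WClosed (L : Set (H →L[ℂ] H)))
    (hLie : ∀ T ∈ L, ∀ S ∈ nestAlg N, T * S - S * T ∈ L)
    (P : H →L[ℂ] H) (hP : P ∈ N)
    (hne : ∃ T ∈ L, (1 - P) * T * P ≠ 0) :
    {X | ∃ T ∈ L, X = P * T * (1 - P)} = {X | ∃ A : H →L[ℂ] H, X = P * A * (1 - P)} ∧
    ∀ A : H →L[ℂ] H, P * A * (1 - P) ∈ L := by
  classical
  obtain ⟨T, hT, hTne⟩ := hne
  obtain ⟨hPsa, hPid⟩ := hN.proj P hP
  have hPP : P * P = P := hPid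
  have hP'sa : IsSelfAdjoint ((1 : H →L[ℂ] H) - P) := (IsSelfAdjoint.one (H →L[ℂ] H)).sub hPsa
  have hPP' : P * (1 - P) = 0 := by rw [mul_sub, mul_one, hPP, sub_self]
  have hP'P : (1 - P) * P = 0 := by rw [sub_mul, one_mul, hPP, sub_self]
  have hP'P' : ((1 : H →L[ℂ] H) - P) * (1 - P) = 1 - P := by rw [mul_sub, mul_one, hP'P, sub_zero]
  -- the key double-bracket computation
  have hkey : ∀ A B : H →L[ℂ] H,
      (P*A*(1-P))*T*(P*B*(1-P)) + (P*B*(1-P))*T*(P*A*(1-P)) ∈ L := by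
    intro A B
    have h1 := hLie T hT _ (aux_corner_mem N hN P hP A)
    have h2 := hLie _ h1 _ (aux_corner_mem N hN P hP B)
    have hS12 : (P*A*(1-P)) * (P*B*(1-P)) = 0 := by
      have h : (P*A*(1-P)) * (P*B*(1-P)) = (P*A)*(((1-P)*P)*(B*(1-P))) := by noncomm_ring
      rw [h, hP'P, zero_mul, mul_zero]
    have hS21 : (P*B*(1-P)) * (P*A*(1-P)) = 0 := by
      have h : (P*B*(1-P)) * (P*A*(1-P)) = (P*B)*(((1-P)*P)*(A*(1-P))) := by noncomm_ring
      rw [h, hP'P, zero_mul, mul_zero]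
    have heq : (T*(P*A*(1-P)) - (P*A*(1-P))*T)*(P*B*(1-P))
          - (P*B*(1-P))*(T*(P*A*(1-P)) - (P*A*(1-P))*T)
        = T*((P*A*(1-P))*(P*B*(1-P))) + ((P*B*(1-P))*(P*A*(1-P)))*T
          - ((P*A*(1-P))*T*(P*B*(1-P)) + (P*B*(1-P))*T*(P*A*(1-P))) := by noncomm_ring
    rw [heq, hS12, hS21, mul_zero, zero_mul, zero_add, zero_sub] at h2
    simpa using L.neg_mem h2
  have hPR : ∀ x y : H, P * rankOne x y * (1 - P) = rankOne ((1-P) x) (P y) := fun x y => by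
    rw [aux_mul_rankOne, aux_rankOne_mul _ hP'sa]
  have hK : ∀ x₁ y₁ x₂ y₂ : H,
      ⟪(1-P) x₁, T (P y₂)⟫_ℂ • rankOne ((1-P) x₂) (P y₁)
        + ⟪(1-P) x₂, T (P y₁)⟫_ℂ • rankOne ((1-P) x₁) (P y₂) ∈ L := by
    intro x₁ y₁ x₂ y₂
    have h := hkey (rankOne x₁ y₁) (rankOne x₂ y₂)
    rw [hPR, hPR] at h
    simp only [mul_assoc, aux_mul_rankOne] at h
    simp only [aux_rankOne_apply, aux_rankOne_smul] at h
    exact h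
  -- produce the vectors e and f
  obtain ⟨e₀, he₀⟩ : ∃ e₀ : H, ((1 - P) * T * P) e₀ ≠ 0 := by
    by_contra h
    push_neg at h
    exact hTne (ContinuousLinearMap.ext fun v => by simpa using h v)
  set e : H := P e₀ with he_def
  set f : H := (1 - P) (T e) with hf_def
  have hPe₀ : P e₀ = e := rfl
  have hf0 : f ≠ 0 := by
    intro h
    apply he₀
    show ((1 - P) * T * P) e₀ = 0
    rw [ContinuousLinearMap.mul_apply, ContinuousLinearMap.mul_apply]
    exact h
  have hP'f : (1 - P) f = f := by
    rw [hf_def, ← ContinuousLinearMap.mul_apply, hP'P']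
  have hPf : P f = 0 := by
    rw [hf_def, ← ContinuousLinearMap.mul_apply, hPP', ContinuousLinearMap.zero_apply]
  have hsplit : P (T e) + f = T e := by
    rw [hf_def]
    simp [ContinuousLinearMap.sub_apply]
  have hfTe : ⟪f, T e⟫_ℂ = ⟪f, f⟫_ℂ := by
    conv_lhs => rw [← hsplit]
    rw [inner_add_right]
    have h0 : ⟪f, P (T e)⟫_ℂ = 0 := by
      rw [← ContinuousLinearMap.adjoint_inner_left, hPsa.adjoint_eq, hPf, inner_zero_left]
    rw [h0, zero_add]
  have hffne : ⟪f, f⟫_ℂ ≠ 0 := inner_self_ne_zero.mpr hf0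
  have hRfe : rankOne f e ∈ L := by
    have h := hK f e₀ f e₀
    simp only [hP'f, hPe₀, hfTe] at h
    rw [← add_smul] at h
    have hcne : ⟪f, f⟫_ℂ + ⟪f, f⟫_ℂ ≠ 0 := by
      rw [← two_mul]; exact mul_ne_zero two_ne_zero hffne
    exact (L.smul_mem_iff hcne).mp h
  have hrank : ∀ x y : H, rankOne ((1-P) x) (P y) ∈ L := by
    intro x y
    have h := hK f y x e₀
    simp only [hP'f, hPe₀, hfTe] at h
    have h2 := L.sub_mem h (L.smul_mem (⟪(1-P) x, T (P y)⟫_ℂ) hRfe)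
    rw [add_sub_cancel_right] at h2
    exact (L.smul_mem_iff hffne).mp h2
  -- finite rank approximation
  have happrox : ∀ A : H →L[ℂ] H, ∀ J : Finset H,
      ∃ s ∈ L, ∀ x ∈ J, s x = (P * A * (1 - P)) x := by
    intro A J
    have hVfin : FiniteDimensional ℂ
        (Submodule.span ℂ ((fun z => (1 - P) z) '' (J : Set H))) :=
      FiniteDimensional.span_of_finite ℂ (J.finite_toSet.image _)
    set V : Submodule ℂ H := Submodule.span ℂ ((fun z => (1 - P) z) '' (J : Set H)) with hV
    have hVle : V ≤ LinearMap.ker (P : H →ₗ[ℂ] H) := by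
      rw [hV, Submodule.span_le]
      rintro _ ⟨x, -, rfl⟩
      show P ((1 - P) x) = 0
      rw [← ContinuousLinearMap.mul_apply, hPP', ContinuousLinearMap.zero_apply]
    have hfixV : ∀ w, w ∈ V → (1 - P) w = w := by
      intro w hw
      have hz : P w = 0 := hVle hw
      simp [ContinuousLinearMap.sub_apply, hz]
    let b := stdOrthonormalBasis ℂ V
    refine ⟨∑ i, rankOne ((b i : H)) (P (A (b i))), ?_, ?_⟩
    · apply Submodule.sum_mem
      intro i _
      have hfix : ((1 : H →L[ℂ] H) - P) ((b i : H)) = (b i : H) :=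
        hfixV _ (SetLike.coe_mem (b i))
      have := hrank ((b i : H)) (A (b i))
      rwa [hfix] at this
    · intro x hx
      have hxV : (1 - P) x ∈ V := Submodule.subset_span ⟨x, hx, rfl⟩
      have hexp : ∑ i, ⟪(b i : H), ((1-P) x)⟫_ℂ • (b i : H) = (1 - P) x := by
        have h1 := b.sum_repr ⟨(1 - P) x, hxV⟩
        have h2 := congrArg (Subtype.val) h1
        simp [b.repr_apply_apply, Submodule.coe_inner] at h2 ⊢
        simpa [inner_sub_right, sub_smul] using h2
      have hxin : ∀ i, ⟪(b i : H), x⟫_ℂ = ⟪(b i : H), (1 - P) x⟫_ℂ := by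
        intro i
        conv_rhs => rw [← ContinuousLinearMap.adjoint_inner_left, hP'sa.adjoint_eq,
          hfixV _ (SetLike.coe_mem (b i))]
      calc (∑ i, rankOne ((b i : H)) (P (A (b i)))) x
          = ∑ i, ⟪(b i : H), x⟫_ℂ • P (A (b i)) := by
            simp [ContinuousLinearMap.sum_apply, aux_rankOne_apply]
        _ = ∑ i, ⟪(b i : H), (1 - P) x⟫_ℂ • P (A (b i)) := by
            refine Finset.sum_congr rfl fun i _ => by rw [hxin i]
        _ = P (A (∑ i, ⟪(b i : H), (1 - P) x⟫_ℂ • (b i : H))) := by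
            rw [map_sum, map_sum]
            refine Finset.sum_congr rfl fun i _ => by rw [map_smul, map_smul]
        _ = P (A ((1 - P) x)) := by rw [hexp]
        _ = (P * A * (1 - P)) x := rfl
  -- pass to the weak closure
  have hmain : ∀ A : H →L[ℂ] H, P * A * (1 - P) ∈ L := by
    intro A
    choose s hsL hsAgree using happrox A
    have htend : Filter.Tendsto (fun J : Finset H => ContinuousLinearMapWOT.ofCLM (s J))
        Filter.atTop (nhds (ContinuousLinearMapWOT.ofCLM (P * A * (1 - P)))) := by
      rw [ContinuousLinearMapWOT.tendsto_iff_forall_dual_apply_tendsto]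
      intro x y
      have hev : (fun J : Finset H => y ((ContinuousLinearMapWOT.ofCLM (s J)) x))
          =ᶠ[Filter.atTop]
          (fun _ : Finset H => y (((ContinuousLinearMapWOT.ofCLM (P*A*(1-P)) : H →WOT[ℂ] H)) x)) := by
        filter_upwards [Filter.eventually_ge_atTop ({x} : Finset H)] with J hJ
        have hxJ : x ∈ J := hJ (Finset.mem_singleton_self x)
        rw [ContinuousLinearMapWOT.coe_ofCLM, ContinuousLinearMapWOT.coe_ofCLM, hsAgree J x hxJ]
      exact Filter.Tendsto.congr' hev.symm tendsto_const_nhds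
    have hmem2 : ∀ᶠ J : Finset H in Filter.atTop, ContinuousLinearMapWOT.ofCLM (s J)
        ∈ ContinuousLinearMapWOT.ofCLM '' (L : Set (H →L[ℂ] H)) :=
      Filter.Eventually.of_forall fun J => ⟨s J, hsL J, rfl⟩
    have hcl := mem_closure_of_tendsto htend hmem2
    rw [IsClosed.closure_eq hLc] at hcl
    obtain ⟨T', hT', hTeq⟩ := hcl
    rwa [← ContinuousLinearMapWOT.ofCLM_injective hTeq]
  refine ⟨?_, hmain⟩
  ext X
  simp only [Set.mem_setOf_eq]
  constructor
  · rintro ⟨T', _, rfl⟩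
    exact ⟨T', rfl⟩
  · rintro ⟨A, rfl⟩
    refine ⟨P * A * (1 - P), hmain A, ?_⟩
    have h : P * (P * A * (1 - P)) * (1 - P) = (P*P) * A * ((1-P)*(1-P)) := by noncomm_ring
    rw [h, hPP, hP'P']
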